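/- Let k ≥ 2, q ≥ 1 and π ∈ 𝕊_{k−1}. Then the total number of edges of the graph G^π_{k,q} equals Σ_{i=1}^{⌈(k−1)/2⌉} cs_i(π) · C(q+k−2−|S(π)|−i, k−1). -/

import Mathlib

open Finset

attribute [local instance] Classical.propDecidable

noncomputable section

/-- `π` is a permutation of `{1,…,k-1}` given in one-line notation
(`π p` is the entry at position `p`), normalized to `0` outside `[1,k-1]`. -/
def OneLine (k : ℕ) (π : ℕ → ℕ) : Prop :=
  Set.BijOn π (Set.Icc 1 (k - 1)) (Set.Icc 1 (k - 1)) ∧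
    ∀ p, p ∉ Set.Icc 1 (k - 1) → π p = 0

/-- The set `S(π)` of adjacent inversions of `π`:
those `i ∈ [1,k-2]` such that `i+1` appears before `i` in `π`. -/
def adjInvF (k : ℕ) (π : ℕ → ℕ) : Finset ℕ :=
  (Finset.Icc 1 (k - 2)).filter fun i =>
    ∃ p ∈ Finset.Icc 1 (k - 1), ∃ r ∈ Finset.Icc 1 (k - 1),
      p < r ∧ π p = i + 1 ∧ π r = i

/-- `W^π_{k,q}`: weakly increasing `(k-1)`-tuples with entries in `[0,q-1]`
that are strictly increasing at every adjacent inversion of `π`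
(vectors are functions `ℕ → ℕ` supported on `[1,k-1]`). -/
def W (k q : ℕ) (π : ℕ → ℕ) : Set (ℕ → ℕ) :=
  {v | (∀ i, i ∉ Finset.Icc 1 (k - 1) → v i = 0) ∧
       (∀ i ∈ Finset.Icc 1 (k - 1), v i ≤ q - 1) ∧
       (∀ i, 1 ≤ i → i + 1 ≤ k - 1 → v i ≤ v (i + 1)) ∧
       (∀ i ∈ adjInvF k π, v i < v (i + 1))}

/-- `x + e_{π_a} + e_{π_{a+1}} + ⋯ + e_{π_{b-1}}`. -/
def shift (π : ℕ → ℕ) (a b : ℕ) (x : ℕ → ℕ) : ℕ → ℕ :=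
  fun i => x i + if i ∈ (Finset.Icc a (b - 1)).image π then 1 else 0

/-- Adjacency in the graph `G^π_{k,q}`: one vertex is obtained from the other
by adding `e_{π_a} + ⋯ + e_{π_{b-1}}` for some `1 ≤ a < b ≤ k`. -/
def AdjRel (k : ℕ) (π : ℕ → ℕ) (x y : ℕ → ℕ) : Prop :=
  ∃ a b, 1 ≤ a ∧ a < b ∧ b ≤ k ∧ (y = shift π a b x ∨ x = shift π a b y)

/-- The number of maximal blocks of consecutive integers of a finite set `T ⊆ ℕ`. -/
def numBlocks (T : Finset ℕ) : ℕ := (T.filter fun t => t + 1 ∉ T).card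

/-- `cs_i(π)`: the number of pairs `1 ≤ a < b ≤ k` such that
`T_{a,b} = {π_a,…,π_{b-1}}` decomposes into exactly `i` maximal blocks
of consecutive integers. -/
def cs (k : ℕ) (π : ℕ → ℕ) (i : ℕ) : ℕ :=
  ((Finset.Icc 1 k ×ˢ Finset.Icc 1 k).filter fun p =>
    p.1 < p.2 ∧ numBlocks ((Finset.Icc p.1 (p.2 - 1)).image π) = i).card

/-- For `i < j`, `{i,j}` is an edge of `G_π` iff `{i,i+1,…,j-1}` occurs as
a set of consecutive entries of `π`. -/
def GpiEdge (k : ℕ) (π : ℕ → ℕ) (i j : ℕ) : Prop :=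
  ∃ a, 1 ≤ a ∧ a + (j - i) ≤ k ∧
    (Finset.Icc a (a + (j - i) - 1)).image π = Finset.Icc i (j - 1)

/-- Unordered adjacency in `G_π`. -/
def GpiAdjU (k : ℕ) (π : ℕ → ℕ) (i j : ℕ) : Prop :=
  (i < j ∧ GpiEdge k π i j) ∨ (j < i ∧ GpiEdge k π j i)

/-- The position of the value `v` in the one-line notation of `π`. -/
def posOf (k : ℕ) (π : ℕ → ℕ) (v : ℕ) : ℕ :=
  if h : ((Finset.Icc 1 (k - 1)).filter fun t => π t = v).Nonempty then
    ((Finset.Icc 1 (k - 1)).filter fun t => π t = v).min' h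
  else 0

/-- The rotation `r` on one-line permutations: if `π = π₁…π_{t-1}(k-1)π_{t+1}…π_{k-1}`,
then `r(π) = (π_{t+1}+1)…(π_{k-1}+1) 1 (π₁+1)…(π_{t-1}+1)`. -/
def rot (k : ℕ) (π : ℕ → ℕ) : ℕ → ℕ := fun p =>
  if p ∉ Finset.Icc 1 (k - 1) then 0
  else if p < k - posOf k π (k - 1) then π (posOf k π (k - 1) + p) + 1
  else if p = k - posOf k π (k - 1) then 1
  else π (p - (k - posOf k π (k - 1))) + 1

/-- The reflection `s` on one-line permutations: if `π = π₁…π_{i-1} 1 π_{i+1}…π_{k-1}`,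
then `s(π) = (k+1-π_{i-1})…(k+1-π₁) 1 (k+1-π_{k-1})…(k+1-π_{i+1})`. -/
def srefl (k : ℕ) (π : ℕ → ℕ) : ℕ → ℕ := fun p =>
  if p ∉ Finset.Icc 1 (k - 1) then 0
  else if p < posOf k π 1 then k + 1 - π (posOf k π 1 - p)
  else if p = posOf k π 1 then 1
  else k + 1 - π (k + posOf k π 1 - p)

/-- The rotation `ρ` of the vertex set `{1,…,k}`. -/
def rotV (k i : ℕ) : ℕ := if i < k then i + 1 else 1

/-- The reflection `σ` of the vertex set `{1,…,k}`. -/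
def sreflV (k i : ℕ) : ℕ := if i = 1 then 1 else k + 2 - i

/-- The maximal sorted family `(S₁,…,S_k)` associated with `σ`, `0`-indexed:
`sortedFam k σ (i-1) = S_i`. -/
def sortedFam (k : ℕ) (σ : ℕ → ℕ) : ℕ → Finset ℕ
  | 0 => insert 1 ((adjInvF k σ).image (· + 1))
  | j + 1 => insert (σ (j + 1) + 1) ((sortedFam k σ j).erase (σ (j + 1)))

/-- `ear(π)`. -/
def ear (k : ℕ) (π : ℕ → ℕ) : ℕ :=
  ((Finset.Icc 1 (k - 2)).filter fun i => π (i + 1) = π i + 1 ∨ π i = π (i + 1) + 1).card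
    + (({1, k - 1} : Finset ℕ) ∩ ({π 1, π (k - 1)} : Finset ℕ)).card

/-- `ε_i(π) = 1` if `i-1 ∈ S(π)` and `0` otherwise. -/
def eps (k : ℕ) (π : ℕ → ℕ) (i : ℕ) : ℕ := if i - 1 ∈ adjInvF k π then 1 else 0

/-- Extension of a vector with the conventions `x_k = q-1` (`x₀ = 0` holds by
the normalization of vectors in `W^π_{k,q}`). -/
def xext (k q : ℕ) (x : ℕ → ℕ) (i : ℕ) : ℕ := if i = k then q - 1 else x i

/-- The label list `L^π(x) = {i ∈ [1,k] : x_{i-1} < x_i - ε_i(π)}`. -/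
def labels (k q : ℕ) (π : ℕ → ℕ) (x : ℕ → ℕ) : Finset ℕ :=
  (Finset.Icc 1 k).filter fun i => xext k q x (i - 1) + eps k π i < xext k q x i

/-- A Sperner labeling of `G^π_{k,q}`. -/
def IsSperner (k q : ℕ) (π : ℕ → ℕ) (f : (ℕ → ℕ) → ℕ) : Prop :=
  (∀ x ∈ W k q π, f x = 0 ∨ f x ∈ labels k q π x) ∧
  (∀ x ∈ W k q π, ∀ y ∈ W k q π, AdjRel k π x y → f x = f y ∨ f x = 0 ∨ f y = 0)

/-- The entry `w` appears between the entries `u` and `v` in `π`. -/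
def Between (k : ℕ) (π : ℕ → ℕ) (u v w : ℕ) : Prop :=
  (posOf k π u < posOf k π w ∧ posOf k π w < posOf k π v) ∨
  (posOf k π v < posOf k π w ∧ posOf k π w < posOf k π u)

/-- A good set of colors for `π`. -/
def GoodSet (k : ℕ) (π : ℕ → ℕ) (C : Finset ℕ) : Prop :=
  C ⊆ Finset.Icc 1 k ∧
  (∀ i ∈ C, ∀ j ∈ C, i ≠ j → ¬ GpiAdjU k π i j) ∧
  (∀ a ∈ C, ∀ b ∈ C, 1 < a → a < b → b < k →
      ((Between k π (a - 1) b a ∨ Between k π (a - 1) b (b - 1)) ∧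
       (Between k π (b - 1) a (a - 1) ∨ Between k π (b - 1) a b))) ∧
  (1 ∈ C → ∀ b ∈ C, b ≠ 1 → Between k π 1 (b - 1) b) ∧
  (k ∈ C → ∀ b ∈ C, b ≠ k → Between k π b (k - 1) (b - 1))

/-- `x_a - x_{a-1} - ε_a(π)`, the `a`-th coordinate of the distance map `D`. -/
def dval (k q : ℕ) (π : ℕ → ℕ) (x : ℕ → ℕ) (a : ℕ) : ℕ :=
  xext k q x a - xext k q x (a - 1) - eps k π a

/-- The distance coloring determined by a set of colors `C`:
`x` gets color `a ∈ C` if `dval x a` is the unique maximum of `dval x` on `C`,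
and `0` otherwise. -/
def dcol (k q : ℕ) (π : ℕ → ℕ) (C : Finset ℕ) (x : ℕ → ℕ) : ℕ :=
  if h : ∃ a ∈ C, ∀ b ∈ C, b ≠ a → dval k q π x b < dval k q π x a then h.choose else 0

namespace Stmt3Aux

def Hp (g : ℕ → ℕ) (j : ℕ) : ℕ := ∑ l ∈ Finset.Icc 1 j, g l

def chainSet (k q : ℕ) (g : ℕ → ℕ) : Set (ℕ → ℕ) :=
  {x | (∀ i, i ∉ Finset.Icc 1 (k-1) → x i = 0) ∧
    ∀ j ∈ Finset.Icc 1 k, x (j-1) + g j ≤ if j = k then q - 1 else x j}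

lemma Hp_zero (g : ℕ → ℕ) : Hp g 0 = 0 := by simp [Hp]

lemma Hp_succ (g : ℕ → ℕ) (j : ℕ) : Hp g (j+1) = Hp g j + g (j+1) := by
  rw [Hp, Hp, Finset.sum_Icc_succ_top (by omega)]

lemma chain_cond {k q : ℕ} {g : ℕ → ℕ} {x : ℕ → ℕ} (hx : x ∈ chainSet k q g)
    (j : ℕ) (h1 : 1 ≤ j) (h2 : j ≤ k) :
    x (j-1) + g j ≤ if j = k then q - 1 else x j :=
  hx.2 j (by simp [Finset.mem_Icc]; omega)

lemma chain_x0 {k q : ℕ} {g : ℕ → ℕ} {x : ℕ → ℕ} (hx : x ∈ chainSet k q g) : x 0 = 0 :=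
  hx.1 0 (by simp)

lemma chain_lb {k q : ℕ} {g : ℕ → ℕ} {x : ℕ → ℕ} (hk : 2 ≤ k)
    (hx : x ∈ chainSet k q g) : ∀ j, j ≤ k - 1 → Hp g j ≤ x j := by
  intro j
  induction j with
  | zero => intro _; rw [Hp_zero, chain_x0 hx]
  | succ n ih =>
    intro hn
    have h := chain_cond hx (n+1) (by omega) (by omega)
    rw [if_neg (by omega)] at h
    simp only [Nat.add_sub_cancel] at h
    have := ih (by omega)
    rw [Hp_succ]
    omega

lemma chain_top {k q : ℕ} {g : ℕ → ℕ} {x : ℕ → ℕ} (hk : 2 ≤ k)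
    (hx : x ∈ chainSet k q g) : x (k-1) + g k ≤ q - 1 := by
  have h := chain_cond hx k (by omega) le_rfl
  rwa [if_pos rfl] at h

lemma chain_mono {k q : ℕ} {g : ℕ → ℕ} {x : ℕ → ℕ}
    (hx : x ∈ chainSet k q g) : ∀ i j, i ≤ j → j ≤ k - 1 → x i ≤ x j := by
  intro i j hij hj
  induction j with
  | zero => simp [Nat.le_zero.mp hij]
  | succ n ih =>
    rcases Nat.eq_or_lt_of_le hij with h | h
    · exact h ▸ le_rfl
    · have h2 := chain_cond hx (n+1) (by omega) (by omega)
      rw [if_neg (by omega)] at h2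
      simp only [Nat.add_sub_cancel] at h2
      have := ih (by omega) (by omega)
      omega


lemma Hp_split {k : ℕ} (hk : 2 ≤ k) (g : ℕ → ℕ) : Hp g k = Hp g (k-1) + g k := by
  have h : k = (k-1) + 1 := by omega
  rw [h, Hp_succ]; rw [← h]

lemma Hp_one (g : ℕ → ℕ) : Hp g 1 = g 1 := by
  rw [show (1:ℕ) = 0 + 1 from rfl, Hp_succ, Hp_zero, Nat.zero_add]

lemma chain_psi_mono {k q : ℕ} {g x : ℕ → ℕ} (hk : 2 ≤ k)
    (hx : x ∈ chainSet k q g) (j : ℕ) (h1 : 1 ≤ j) :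
    ∀ d, j + d ≤ k - 1 →
      x j + j - Hp g j + d ≤ x (j+d) + (j+d) - Hp g (j+d) := by
  intro d
  induction d with
  | zero => intro _; simp
  | succ n ih =>
    intro hd
    have h2 := chain_cond hx (j+n+1) (by omega) (by omega)
    rw [if_neg (by omega)] at h2
    simp only [Nat.add_sub_cancel] at h2
    have hlb1 := chain_lb hk hx (j+n) (by omega)
    have hlb2 := chain_lb hk hx (j+n+1) (by omega)
    have hHs : Hp g (j+n+1) = Hp g (j+n) + g (j+n+1) := Hp_succ g (j+n)
    have := ih (by omega)
    have : x j + j - Hp g j + n ≤ x (j+n) + (j+n) - Hp g (j+n) := this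
    have heq : j + (n+1) = (j + n) + 1 := by omega
    rw [heq]
    omega

lemma chain_psi_mem {k q : ℕ} {g x : ℕ → ℕ} (hk : 2 ≤ k) (hq : 1 ≤ q)
    (hx : x ∈ chainSet k q g) (j : ℕ) (h1 : 1 ≤ j) (h2 : j ≤ k - 1) :
    1 ≤ x j + j - Hp g j ∧ x j + j - Hp g j ≤ q + k - 2 - Hp g k := by
  have hlb := chain_lb hk hx j h2
  have hmono := chain_psi_mono hk hx j h1 (k-1-j) (by omega)
  rw [show j + (k-1-j) = k-1 by omega] at hmono
  have htop := chain_top hk hx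
  have hlbk := chain_lb hk hx (k-1) le_rfl
  have hsplit := Hp_split hk g
  omega

lemma chain_card_phi {k q : ℕ} {g x : ℕ → ℕ} (hk : 2 ≤ k)
    (hx : x ∈ chainSet k q g) :
    ((Finset.Icc 1 (k-1)).image (fun j => x j + j - Hp g j)).card = k - 1 := by
  rw [Finset.card_image_of_injOn, Nat.card_Icc]
  · omega
  · intro a ha b hb hab
    simp only at hab
    simp only [Finset.coe_Icc, Set.mem_Icc] at ha hb
    by_contra hne
    rcases Nat.lt_or_ge a b with h | h
    · have := chain_psi_mono hk hx a ha.1 (b - a) (by omega)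
      rw [show a + (b-a) = b by omega] at this
      omega
    · have hba : b < a := by omega
      have := chain_psi_mono hk hx b hb.1 (a - b) (by omega)
      rw [show b + (a-b) = a by omega] at this
      omega

lemma chainSet_bijOn {k q : ℕ} (hk : 2 ≤ k) (hq : 1 ≤ q) (g : ℕ → ℕ)
    (hG : Hp g k ≤ q - 1) :
    Set.BijOn (fun x => (Finset.Icc 1 (k-1)).image (fun j => x j + j - Hp g j))
      (chainSet k q g)
      ↑((Finset.Icc 1 (q + k - 2 - Hp g k)).powersetCard (k-1)) := by
  set N := q + k - 2 - Hp g k with hN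
  refine ⟨?_, ?_, ?_⟩
  · -- MapsTo
    intro x hx
    simp only [Finset.mem_coe, Finset.mem_powersetCard]
    constructor
    · intro m hm
      simp only [Finset.mem_image, Finset.mem_Icc] at hm
      obtain ⟨j, hj, rfl⟩ := hm
      have := chain_psi_mem hk hq hx j hj.1 hj.2
      simp only [Finset.mem_Icc]
      exact this
    · exact chain_card_phi hk hx
  · -- InjOn
    intro x hx y hy hxy
    simp only at hxy
    have hcx := chain_card_phi hk hx
    have hcy := chain_card_phi hk hy
    have key : ∀ i, 1 ≤ i → i ≤ k - 1 → x i + i - Hp g i = y i + i - Hp g i := by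
      have hfx : (fun i : Fin (k-1) => x (i+1) + (i+1) - Hp g (i+1))
          = ((Finset.Icc 1 (k-1)).image (fun j => x j + j - Hp g j)).orderEmbOfFin hcx := by
        apply Finset.orderEmbOfFin_unique
        · intro i
          exact Finset.mem_image_of_mem _ (by simp [Finset.mem_Icc])
        · intro i i' hii
          have := chain_psi_mono hk hx (i+1) (by omega) (i'-i) (by omega)
          have hlt : (i:ℕ) < i' := hii
          rw [show (i:ℕ) + 1 + ((i':ℕ)-(i:ℕ)) = (i':ℕ)+1 by omega] at this
          simp only
          omega
      have hfy : (fun i : Fin (k-1) => y (i+1) + (i+1) - Hp g (i+1))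
          = ((Finset.Icc 1 (k-1)).image (fun j => x j + j - Hp g j)).orderEmbOfFin hcx := by
        apply Finset.orderEmbOfFin_unique
        · intro i
          rw [hxy]
          exact Finset.mem_image_of_mem _ (by simp [Finset.mem_Icc])
        · intro i i' hii
          have := chain_psi_mono hk hy (i+1) (by omega) (i'-i) (by omega)
          have hlt : (i:ℕ) < i' := hii
          rw [show (i:ℕ) + 1 + ((i':ℕ)-(i:ℕ)) = (i':ℕ)+1 by omega] at this
          simp only
          omega
      intro i h1 h2
      have hcongr : ∀ (j : Fin (k-1)),
          x ((j:ℕ)+1) + ((j:ℕ)+1) - Hp g ((j:ℕ)+1) = y ((j:ℕ)+1) + ((j:ℕ)+1) - Hp g ((j:ℕ)+1) :=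
        fun j => congrFun (hfx.trans hfy.symm) j
      have := hcongr ⟨i-1, by omega⟩
      simpa [show i - 1 + 1 = i by omega] using this
    funext i
    by_cases hi : i ∈ Finset.Icc 1 (k-1)
    · simp only [Finset.mem_Icc] at hi
      have := key i hi.1 hi.2
      have hlx := chain_lb hk hx i hi.2
      have hly := chain_lb hk hy i hi.2
      omega
    · rw [hx.1 i hi, hy.1 i hi]
  · -- SurjOn
    intro C hC
    simp only [Finset.mem_coe, Finset.mem_powersetCard] at hC
    obtain ⟨hsub, hcard⟩ := hC
    have hsub' : ∀ m ∈ C, 1 ≤ m ∧ m ≤ N := by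
      intro m hm; have := hsub hm; simpa [Finset.mem_Icc] using this
    set E := C.orderEmbOfFin hcard with hE
    set u : ℕ → ℕ := fun m => if h : m < k - 1 then E ⟨m, h⟩ else 0 with hu
    have hu_mem : ∀ m, m < k-1 → u m ∈ C := by
      intro m h; rw [hu]; simp only [h, dif_pos]; exact Finset.orderEmbOfFin_mem C hcard _
    have hu_lt : ∀ m m', m < m' → m' < k-1 → u m < u m' := by
      intro m m' h h'
      rw [hu]; simp only [dif_pos (by omega : m < k-1), dif_pos h']
      exact E.strictMono (by exact h)
    have hu_lb : ∀ m, m < k-1 → m + 1 ≤ u m := by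
      intro m
      induction m with
      | zero => intro h; exact (hsub' _ (hu_mem 0 h)).1
      | succ n ih =>
        intro h
        have := ih (by omega)
        have := hu_lt n (n+1) (by omega) h
        omega
    have hu_ub : ∀ m, m < k-1 → u m ≤ N := fun m h => (hsub' _ (hu_mem m h)).2
    set x : ℕ → ℕ := fun j => if 1 ≤ j ∧ j ≤ k - 1 then u (j-1) + Hp g j - j else 0 with hxdef
    have hxval : ∀ j, 1 ≤ j → j ≤ k-1 → x j = u (j-1) + Hp g j - j := by
      intro j h1 h2; rw [hxdef]; simp only [if_pos (And.intro h1 h2)]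
    have hxmem : x ∈ chainSet k q g := by
      constructor
      · intro i hi
        simp only [Finset.mem_Icc] at hi
        rw [hxdef]; simp only [if_neg (by omega : ¬(1 ≤ i ∧ i ≤ k-1))]
      · intro j hj
        simp only [Finset.mem_Icc] at hj
        rcases Nat.lt_or_ge j k with hjk | hjk
        · rw [if_neg (by omega)]
          rcases Nat.eq_or_lt_of_le hj.1 with h1 | h1
          · -- j = 1
            have hx0 : x 0 = 0 := by rw [hxdef]; simp
            have hx1 : x 1 = u 0 + Hp g 1 - 1 := hxval 1 le_rfl (by omega)
            have hu0 := hu_lb 0 (by omega)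
            rw [← h1, hx0, hx1, Hp_one]
            omega
          · -- 2 ≤ j ≤ k-1
            have hxj := hxval j (by omega) (by omega)
            have hxj1 := hxval (j-1) (by omega) (by omega)
            have hHs : Hp g j = Hp g (j-1) + g j := by
              have : j = (j-1) + 1 := by omega
              rw [this, Hp_succ]; rw [← this]
            have hlt := hu_lt (j-1-1) (j-1) (by omega) (by omega)
            have hlb1 := hu_lb (j-1-1) (by omega)
            have hlb2 := hu_lb (j-1) (by omega)
            rw [hxj, hxj1]
            omega
        · -- j = k
          have hjk' : j = k := by omega
          rw [hjk', if_pos rfl]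
          have hxk := hxval (k-1) (by omega) le_rfl
          have hub := hu_ub (k-1-1) (by omega)
          have hlb := hu_lb (k-1-1) (by omega)
          have hsplit := Hp_split hk g
          rw [hxk]
          omega
    refine ⟨x, hxmem, ?_⟩
    simp only
    have hcardphi := chain_card_phi hk hxmem
    apply Finset.eq_of_subset_of_card_le
    · intro m hm
      simp only [Finset.mem_image, Finset.mem_Icc] at hm
      obtain ⟨j, hj, rfl⟩ := hm
      have hxj := hxval j hj.1 hj.2
      have hlb := hu_lb (j-1) (by omega)
      have : x j + j - Hp g j = u (j-1) := by omega
      rw [this]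
      exact hu_mem (j-1) (by omega)
    · rw [hcard, hcardphi]

lemma chainSet_finite {k q : ℕ} (hk : 2 ≤ k) (hq : 1 ≤ q) (g : ℕ → ℕ) :
    (chainSet k q g).Finite := by
  rcases Nat.lt_or_ge (q-1) (Hp g k) with hG | hG
  · convert Set.finite_empty
    ext x
    simp only [Set.mem_empty_iff_false, iff_false]
    intro hx
    have h1 := chain_lb hk hx (k-1) le_rfl
    have h2 := chain_top hk hx
    have h3 := Hp_split hk g
    omega
  · have hbij := chainSet_bijOn hk hq g hG
    exact Set.Finite.of_finite_image (Set.Finite.subset (Finset.finite_toSet _) (by rw [hbij.image_eq])) hbij.injOn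

lemma chainSet_ncard {k q : ℕ} (hk : 2 ≤ k) (hq : 1 ≤ q) (g : ℕ → ℕ) :
    (chainSet k q g).ncard = (q + k - 2 - Hp g k).choose (k-1) := by
  rcases Nat.lt_or_ge (q-1) (Hp g k) with hG | hG
  · have hempty : chainSet k q g = ∅ := by
      ext x
      simp only [Set.mem_empty_iff_false, iff_false]
      intro hx
      have h1 := chain_lb hk hx (k-1) le_rfl
      have h2 := chain_top hk hx
      have h3 := Hp_split hk g
      omega
    rw [hempty, Set.ncard_empty]
    symm
    apply Nat.choose_eq_zero_of_lt
    omega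
  · have hbij := chainSet_bijOn hk hq g hG
    rw [← Set.ncard_image_of_injOn hbij.injOn, hbij.image_eq, Set.ncard_coe_finset,
      Finset.card_powersetCard, Nat.card_Icc, Nat.add_sub_cancel]


def gT (k : ℕ) (π : ℕ → ℕ) (T : Finset ℕ) (j : ℕ) : ℕ :=
  (if j - 1 ∈ adjInvF k π then 1 else 0) + (if j - 1 ∈ T ∧ j ∉ T then 1 else 0)

lemma gT_succ (k : ℕ) (π : ℕ → ℕ) (T : Finset ℕ) (i : ℕ) :
    gT k π T (i+1) = (if i ∈ adjInvF k π then 1 else 0) + (if i ∈ T ∧ i+1 ∉ T then 1 else 0) := by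
  simp [gT]

lemma adjInv_sub {k : ℕ} {π : ℕ → ℕ} : adjInvF k π ⊆ Finset.Icc 1 (k-2) := by
  intro i hi
  simp only [adjInvF, Finset.mem_filter] at hi
  exact hi.1

lemma adjInv_mem {k : ℕ} {π : ℕ → ℕ} {i : ℕ} (h : i ∈ adjInvF k π) :
    1 ≤ i ∧ i ≤ k - 2 := by
  have := adjInv_sub h; simpa [Finset.mem_Icc] using this

lemma block_escape {k : ℕ} {T : Finset ℕ} (hT : T ⊆ Finset.Icc 1 (k-1)) :
    ∀ d i, i ∈ T → k - 1 - i ≤ d → ∃ e, i ≤ e ∧ e ≤ k-1 ∧ e ∈ T ∧ e + 1 ∉ T := by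
  intro d
  induction d with
  | zero =>
    intro i hi hd
    have hik : i ≤ k - 1 := by have := hT hi; simp [Finset.mem_Icc] at this; omega
    have : i = k - 1 := by omega
    refine ⟨i, le_rfl, by omega, hi, ?_⟩
    intro hmem
    have := hT hmem; simp [Finset.mem_Icc] at this; omega
  | succ n ih =>
    intro i hi hd
    by_cases h1 : i + 1 ∈ T
    · have hik : i + 1 ≤ k - 1 := by have := hT h1; simp [Finset.mem_Icc] at this; omega
      obtain ⟨e, he1, he2, he3, he4⟩ := ih (i+1) h1 (by omega)
      exact ⟨e, by omega, he2, he3, he4⟩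
    · have hik : i ≤ k - 1 := by have := hT hi; simp [Finset.mem_Icc] at this; omega
      exact ⟨i, le_rfl, hik, hi, h1⟩

lemma mem_W_shift_iff {k q : ℕ} (hk : 2 ≤ k) (hq : 1 ≤ q) (π : ℕ → ℕ) (T : Finset ℕ)
    (hT : T ⊆ Finset.Icc 1 (k-1)) (x : ℕ → ℕ) :
    (x ∈ W k q π ∧ (fun i => x i + if i ∈ T then 1 else 0) ∈ W k q π)
      ↔ x ∈ chainSet k q (gT k π T) := by
  have hTk : k ∉ T := by intro h; have := hT h; simp [Finset.mem_Icc] at this; omega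
  have hT0 : (0:ℕ) ∉ T := by intro h; have := hT h; simp [Finset.mem_Icc] at this
  constructor
  · rintro ⟨⟨hsupp, hbd, hmono, hstrict⟩, ⟨hsupp', hbd', hmono', hstrict'⟩⟩
    refine ⟨hsupp, ?_⟩
    intro j hj
    simp only [Finset.mem_Icc] at hj
    rcases Nat.eq_or_lt_of_le hj.2 with hjk | hjk
    · -- j = k
      subst hjk
      rw [if_pos rfl]
      have he1 : (if j - 1 ∈ adjInvF j π then 1 else 0) = 0 := by
        rw [if_neg]; intro h; have := adjInv_mem h; omega
      by_cases hTj : j - 1 ∈ T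
      · have := hbd' (j-1) (by simp [Finset.mem_Icc]; omega)
        simp only [if_pos hTj] at this
        simp only [gT, he1, if_pos (And.intro hTj hTk)]
        omega
      · have := hbd (j-1) (by simp [Finset.mem_Icc]; omega)
        simp only [gT, he1, if_neg (show ¬(j - 1 ∈ T ∧ j ∉ T) from fun h => hTj h.1)]
        omega
    · -- j ≤ k - 1
      rw [if_neg (by omega)]
      rcases Nat.eq_or_lt_of_le hj.1 with h1 | h1
      · -- j = 1
        have hx0 : x 0 = 0 := hsupp 0 (by simp)
        have : gT k π T 1 = 0 := by
          simp only [gT]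
          rw [if_neg (by intro h; have := adjInv_mem h; omega),
            if_neg (by intro h; exact hT0 h.1)]
        rw [← h1, hx0, this]
        omega
      · -- 2 ≤ j ≤ k-1
        set i := j - 1 with hi
        have hij : j = i + 1 := by omega
        have h1i : 1 ≤ i := by omega
        have h2i : i + 1 ≤ k - 1 := by omega
        have hmx : x i ≤ x (i+1) := hmono i h1i h2i
        have hmx' : x i + (if i ∈ T then 1 else 0) ≤ x (i+1) + (if i+1 ∈ T then 1 else 0) :=
          hmono' i h1i h2i
        rw [hij, gT_succ]
        by_cases hiS : i ∈ adjInvF k π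
        · have hsx : x i < x (i+1) := hstrict i hiS
          have hsx' : x i + (if i ∈ T then 1 else 0) < x (i+1) + (if i+1 ∈ T then 1 else 0) :=
            hstrict' i hiS
          rw [if_pos hiS]
          by_cases h2 : i ∈ T ∧ i + 1 ∉ T
          · rw [if_pos h2]
            rw [if_pos h2.1, if_neg h2.2] at hsx'
            omega
          · rw [if_neg h2]
            omega
        · rw [if_neg hiS]
          by_cases h2 : i ∈ T ∧ i + 1 ∉ T
          · rw [if_pos h2]
            rw [if_pos h2.1, if_neg h2.2] at hmx'
            omega
          · rw [if_neg h2]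
            omega
  · intro hx
    obtain ⟨hsupp, hcond⟩ := id hx
    have htop := chain_top hk hx
    have hbd1 : ∀ i, 1 ≤ i → i ≤ k - 1 → x i ≤ q - 1 := by
      intro i h1 h2
      have := chain_mono hx i (k-1) h2 le_rfl
      omega
    have hbdT : ∀ i, i ∈ T → x i + 1 ≤ q - 1 := by
      intro i hiT
      obtain ⟨e, he1, he2, he3, he4⟩ := block_escape hT (k-1-i) i hiT le_rfl
      have hxe : x i ≤ x e := chain_mono hx i e he1 he2
      rcases Nat.eq_or_lt_of_le he2 with hek | hek
      · -- e = k-1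
        subst hek
        have hgk : 1 ≤ gT k π T k := by
          have h2 : k - 1 ∈ T ∧ k ∉ T := ⟨he3, hTk⟩
          simp only [gT, if_pos h2]
          omega
        omega
      · have hc := chain_cond hx (e+1) (by omega) (by omega)
        rw [if_neg (by omega)] at hc
        simp only [Nat.add_sub_cancel] at hc
        rw [gT_succ, if_pos (And.intro he3 he4)] at hc
        have : x (e+1) ≤ q - 1 := hbd1 (e+1) (by omega) (by omega)
        omega
    have hmonoc : ∀ i, 1 ≤ i → i + 1 ≤ k - 1 →
        x i + gT k π T (i+1) ≤ x (i+1) := by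
      intro i h1 h2
      have hc := chain_cond hx (i+1) (by omega) (by omega)
      rw [if_neg (by omega)] at hc
      simpa using hc
    constructor
    · refine ⟨hsupp, ?_, ?_, ?_⟩
      · intro i hi
        simp only [Finset.mem_Icc] at hi
        exact hbd1 i hi.1 hi.2
      · intro i h1 h2
        have := hmonoc i h1 h2
        omega
      · intro i hiS
        have hm := adjInv_mem hiS
        have := hmonoc i hm.1 (by omega)
        rw [gT_succ, if_pos hiS] at this
        omega
    · refine ⟨?_, ?_, ?_, ?_⟩
      · intro i hi
        have h1 := hsupp i hi
        have h2 : i ∉ T := fun h => hi (hT h)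
        simp [h1, h2]
      · intro i hi
        simp only [Finset.mem_Icc] at hi
        by_cases hiT : i ∈ T
        · have := hbdT i hiT
          simp only [if_pos hiT]
          omega
        · simp only [if_neg hiT]
          exact hbd1 i hi.1 hi.2
      · intro i h1 h2
        beta_reduce
        have hc := hmonoc i h1 h2
        rw [gT_succ] at hc
        by_cases hA : i ∈ T ∧ i + 1 ∉ T
        · rw [if_pos hA] at hc
          rw [if_pos hA.1, if_neg hA.2]
          omega
        · rw [if_neg hA] at hc
          by_cases hiT : i ∈ T
          · have hi1T : i + 1 ∈ T := by
              by_contra h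
              exact hA ⟨hiT, h⟩
            rw [if_pos hiT, if_pos hi1T]
            omega
          · rw [if_neg hiT]
            omega
      · intro i hiS
        beta_reduce
        have hm := adjInv_mem hiS
        have hc := hmonoc i hm.1 (by omega)
        rw [gT_succ, if_pos hiS] at hc
        by_cases hA : i ∈ T ∧ i + 1 ∉ T
        · rw [if_pos hA] at hc
          rw [if_pos hA.1, if_neg hA.2]
          omega
        · rw [if_neg hA] at hc
          by_cases hiT : i ∈ T
          · have hi1T : i + 1 ∈ T := by
              by_contra h
              exact hA ⟨hiT, h⟩
            rw [if_pos hiT, if_pos hi1T]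
            omega
          · rw [if_neg hiT]
            omega


lemma Hp_gT {k : ℕ} (hk : 2 ≤ k) (π : ℕ → ℕ) (T : Finset ℕ)
    (hT : T ⊆ Finset.Icc 1 (k-1)) :
    Hp (gT k π T) k = (adjInvF k π).card + numBlocks T := by
  rw [Hp]
  unfold gT
  rw [Finset.sum_add_distrib]
  congr 1
  · rw [← Finset.card_filter]
    apply Finset.card_bij (fun j _ => j - 1)
    · intro a ha
      exact (Finset.mem_filter.mp ha).2
    · intro a ha b hb hab
      have ha' := Finset.mem_Icc.mp (Finset.mem_filter.mp ha).1
      have hb' := Finset.mem_Icc.mp (Finset.mem_filter.mp hb).1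
      omega
    · intro s hs
      have hm := adjInv_mem hs
      refine ⟨s + 1, Finset.mem_filter.mpr ⟨Finset.mem_Icc.mpr (by omega), ?_⟩, by omega⟩
      simpa using hs
  · rw [← Finset.card_filter]
    unfold numBlocks
    apply Finset.card_bij (fun j _ => j - 1)
    · intro a ha
      have h1 := Finset.mem_filter.mp ha
      have ha' := Finset.mem_Icc.mp h1.1
      refine Finset.mem_filter.mpr ⟨h1.2.1, ?_⟩
      rw [show a - 1 + 1 = a by omega]
      exact h1.2.2
    · intro a ha b hb hab
      have ha' := Finset.mem_Icc.mp (Finset.mem_filter.mp ha).1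
      have hb' := Finset.mem_Icc.mp (Finset.mem_filter.mp hb).1
      omega
    · intro t ht
      have h1 := Finset.mem_filter.mp ht
      have ht' := Finset.mem_Icc.mp (hT h1.1)
      refine ⟨t + 1, Finset.mem_filter.mpr ⟨Finset.mem_Icc.mpr (by omega), ?_, ?_⟩, by omega⟩
      · simpa using h1.1
      · simpa using h1.2

lemma numBlocks_pos {T : Finset ℕ} (hne : T.Nonempty) : 1 ≤ numBlocks T := by
  rw [numBlocks]
  rw [show (1:ℕ) ≤ (T.filter fun t => t + 1 ∉ T).card ↔ 0 < (T.filter fun t => t + 1 ∉ T).card from Iff.rfl, Finset.card_pos]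
  refine ⟨T.max' hne, Finset.mem_filter.mpr ⟨T.max'_mem hne, ?_⟩⟩
  intro h
  have := Finset.le_max' T _ h
  omega

lemma numBlocks_le {k : ℕ} {T : Finset ℕ} (hne : T.Nonempty)
    (hT : T ⊆ Finset.Icc 1 (k-1)) : numBlocks T ≤ k / 2 := by
  set B := T.filter fun t => t + 1 ∉ T with hB
  have hBT : B ⊆ T := Finset.filter_subset _ _
  have hTcard : T.card ≤ k - 1 := by
    calc T.card ≤ (Finset.Icc 1 (k-1)).card := Finset.card_le_card hT
    _ = k - 1 := by rw [Nat.card_Icc]; omega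
  set M := T.max' hne with hM
  have hMB : M ∈ B := by
    refine Finset.mem_filter.mpr ⟨T.max'_mem hne, ?_⟩
    intro h
    have := Finset.le_max' T _ h
    omega
  have hinj : (B.erase M).card ≤ ((Finset.Icc 1 (k-1)) \ T).card := by
    apply Finset.card_le_card_of_injOn (fun t => t + 1)
    · intro t ht
      have h1 := Finset.mem_erase.mp ht
      have h2 := Finset.mem_filter.mp (h1.2)
      have h3 := Finset.mem_Icc.mp (hT h2.1)
      have hle := Finset.le_max' T t h2.1
      have hne' : t ≠ M := h1.1
      have hlt : t < M := by omega
      have hMle : M ≤ k - 1 := (Finset.mem_Icc.mp (hT (T.max'_mem hne))).2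
      have hmem : t + 1 ∈ (Finset.Icc 1 (k-1)) \ T :=
        Finset.mem_sdiff.mpr ⟨Finset.mem_Icc.mpr (by omega), h2.2⟩
      exact hmem
    · intro a _ b _ h
      simp only at h
      omega
  have hcard_sdiff : ((Finset.Icc 1 (k-1)) \ T).card = (k-1) - T.card := by
    rw [Finset.card_sdiff_of_subset hT, Nat.card_Icc]
    omega
  have hBcard : B.card ≤ T.card := Finset.card_le_card hBT
  have herase : (B.erase M).card = B.card - 1 := Finset.card_erase_of_mem hMB
  have hk1 : 1 ≤ B.card := Finset.card_pos.mpr ⟨M, hMB⟩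
  rw [numBlocks, ← hB]
  omega

-- stage 4 : interval image facts
lemma Tab_subset {k : ℕ} {π : ℕ → ℕ}
    (hπ : Set.BijOn π (Set.Icc 1 (k - 1)) (Set.Icc 1 (k - 1)))
    {a b : ℕ} (ha : 1 ≤ a) (hb : b ≤ k) (hab : a < b) :
    (Finset.Icc a (b-1)).image π ⊆ Finset.Icc 1 (k-1) := by
  intro v hv
  obtain ⟨p, hp, rfl⟩ := Finset.mem_image.mp hv
  have hp' := Finset.mem_Icc.mp hp
  have : π p ∈ Set.Icc 1 (k-1) := hπ.mapsTo (Set.mem_Icc.mpr (by omega))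
  exact Finset.mem_Icc.mpr (Set.mem_Icc.mp this)

lemma Tab_nonempty {π : ℕ → ℕ} {a b : ℕ} (hab : a < b) :
    ((Finset.Icc a (b-1)).image π).Nonempty :=
  ⟨π a, Finset.mem_image_of_mem _ (Finset.mem_Icc.mpr (by omega))⟩

lemma Tab_card {k : ℕ} {π : ℕ → ℕ}
    (hπ : Set.BijOn π (Set.Icc 1 (k - 1)) (Set.Icc 1 (k - 1)))
    {a b : ℕ} (ha : 1 ≤ a) (hb : b ≤ k) (hab : a < b) :
    ((Finset.Icc a (b-1)).image π).card = b - a := by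
  rw [Finset.card_image_of_injOn, Nat.card_Icc]
  · omega
  · intro p hp r hr hpr
    simp only [Finset.coe_Icc, Set.mem_Icc] at hp hr
    exact hπ.injOn (Set.mem_Icc.mpr (by omega)) (Set.mem_Icc.mpr (by omega)) hpr

lemma Tab_inj {k : ℕ} {π : ℕ → ℕ}
    (hπ : Set.BijOn π (Set.Icc 1 (k - 1)) (Set.Icc 1 (k - 1)))
    {a b a' b' : ℕ} (ha : 1 ≤ a) (hb : b ≤ k) (hab : a < b)
    (ha' : 1 ≤ a') (hb' : b' ≤ k) (hab' : a' < b')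
    (heq : (Finset.Icc a (b-1)).image π = (Finset.Icc a' (b'-1)).image π) :
    a = a' ∧ b = b' := by
  have hcard : b - a = b' - a' := by
    rw [← Tab_card hπ ha hb hab, ← Tab_card hπ ha' hb' hab', heq]
  have haa : a = a' := by
    by_contra hne
    rcases Nat.lt_or_ge a a' with h | h
    · have hmem : π a ∈ (Finset.Icc a' (b'-1)).image π := by
        rw [← heq]
        exact Finset.mem_image_of_mem _ (Finset.mem_Icc.mpr (by omega))
      obtain ⟨t, ht, hta⟩ := Finset.mem_image.mp hmem
      have ht' := Finset.mem_Icc.mp ht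
      have : t = a := hπ.injOn (Set.mem_Icc.mpr (by omega)) (Set.mem_Icc.mpr (by omega)) hta
      omega
    · have h' : a' < a := by omega
      have hmem : π a' ∈ (Finset.Icc a (b-1)).image π := by
        rw [heq]
        exact Finset.mem_image_of_mem _ (Finset.mem_Icc.mpr (by omega))
      obtain ⟨t, ht, hta⟩ := Finset.mem_image.mp hmem
      have ht' := Finset.mem_Icc.mp ht
      have : t = a' := hπ.injOn (Set.mem_Icc.mpr (by omega)) (Set.mem_Icc.mpr (by omega)) hta
      omega
  exact ⟨haa, by omega⟩

end Stmt3Aux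

theorem stmt3 (k q : ℕ) (hk : 2 ≤ k) (hq : 1 ≤ q) (π : ℕ → ℕ) (hπ : OneLine k π) :
    {p : Sym2 (ℕ → ℕ) |
        ∃ x y, x ∈ W k q π ∧ y ∈ W k q π ∧ AdjRel k π x y ∧ p = s(x, y)}.ncard
      = ∑ i ∈ Finset.Icc 1 (k / 2),
          cs k π i * Nat.choose (q + k - 2 - (adjInvF k π).card - i) (k - 1) := by
  obtain ⟨hbijπ, hsupp0⟩ := hπ
  set F : Finset (ℕ × ℕ) := (Finset.Icc 1 k ×ˢ Finset.Icc 1 k).filter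
    (fun p : ℕ × ℕ => p.1 < p.2) with hFdef
  have hFmem : ∀ p : ℕ × ℕ, p ∈ F ↔ (1 ≤ p.1 ∧ p.2 ≤ k ∧ p.1 < p.2) := by
    intro p
    rw [hFdef]
    simp only [Finset.mem_filter, Finset.mem_product, Finset.mem_Icc]
    constructor
    · rintro ⟨⟨⟨h1, h2⟩, ⟨h3, h4⟩⟩, h5⟩
      exact ⟨h1, h4, h5⟩
    · rintro ⟨h1, h2, h3⟩
      exact ⟨⟨⟨h1, by omega⟩, ⟨by omega, h2⟩⟩, h3⟩
  have hWfin : (W k q π).Finite := by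
    apply (Stmt3Aux.chainSet_finite hk hq (fun _ => 0)).subset
    intro x hx
    obtain ⟨h1, h2, h3, h4⟩ := hx
    refine ⟨h1, ?_⟩
    intro j hj
    simp only [Finset.mem_Icc] at hj
    simp only
    rcases Nat.eq_or_lt_of_le hj.2 with hjk | hjk
    · rw [if_pos hjk]
      have := h2 (j - 1) (Finset.mem_Icc.mpr (by omega))
      omega
    · rw [if_neg (by omega)]
      rcases Nat.eq_or_lt_of_le hj.1 with h1' | h1'
      · have hx0 : x 0 = 0 := h1 0 (by simp)
        rw [← h1', hx0]
        omega
      · have := h3 (j - 1) (by omega) (by omega)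
        rw [show j - 1 + 1 = j by omega] at this
        omega
  have hbasefin : ∀ p : ℕ × ℕ,
      {x | x ∈ W k q π ∧ shift π p.1 p.2 x ∈ W k q π}.Finite :=
    fun p => hWfin.subset (fun x hx => hx.1)
  have hEpfin : ∀ p : ℕ × ℕ,
      ((fun x => s(x, shift π p.1 p.2 x)) ''
        {x | x ∈ W k q π ∧ shift π p.1 p.2 x ∈ W k q π}).Finite :=
    fun p => (hbasefin p).image _
  have hmemT : ∀ a b : ℕ, a < b → π a ∈ (Finset.Icc a (b - 1)).image π :=
    fun a b hab => Finset.mem_image_of_mem _ (Finset.mem_Icc.mpr (by omega))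
  have hE : {p : Sym2 (ℕ → ℕ) |
        ∃ x y, x ∈ W k q π ∧ y ∈ W k q π ∧ AdjRel k π x y ∧ p = s(x, y)}
      = ⋃ p ∈ F, ((fun x => s(x, shift π p.1 p.2 x)) ''
          {x | x ∈ W k q π ∧ shift π p.1 p.2 x ∈ W k q π}) := by
    ext e
    simp only [Set.mem_setOf_eq, Set.mem_iUnion, Set.mem_image, exists_prop]
    constructor
    · rintro ⟨x, y, hx, hy, ⟨a, b, ha, hab, hbk, hcase⟩, rfl⟩
      refine ⟨(a, b), (hFmem (a, b)).mpr ⟨ha, hbk, hab⟩, ?_⟩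
      rcases hcase with h | h
      · exact ⟨x, ⟨hx, by rw [← h]; exact hy⟩, by rw [← h]⟩
      · refine ⟨y, ⟨hy, by rw [← h]; exact hx⟩, ?_⟩
        rw [← h]
        exact Sym2.eq_swap
    · rintro ⟨p, hp, x, ⟨hx, hsx⟩, rfl⟩
      rw [hFmem] at hp
      exact ⟨x, shift π p.1 p.2 x, hx, hsx,
        ⟨p.1, p.2, hp.1, hp.2.2, hp.2.1, Or.inl rfl⟩, rfl⟩
  have hdisj : ∀ p ∈ F, ∀ p' ∈ F, p ≠ p' →
      Disjoint ((hEpfin p).toFinset) ((hEpfin p').toFinset) := by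
    intro p hp p' hp' hne
    rw [Finset.disjoint_left]
    intro e he he'
    rw [Set.Finite.mem_toFinset] at he he'
    obtain ⟨x, hxb, rfl⟩ := he
    obtain ⟨x', hxb', heq⟩ := he'
    rw [hFmem] at hp hp'
    have hTne : (Finset.Icc p'.1 (p'.2 - 1)).image π
        = (Finset.Icc p.1 (p.2 - 1)).image π → False := by
      intro h
      obtain ⟨h1, h2⟩ := Stmt3Aux.Tab_inj hbijπ hp'.1 hp'.2.1 hp'.2.2
        hp.1 hp.2.1 hp.2.2 h
      exact hne ((Prod.ext h1 h2).symm)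
    simp only at heq
    rw [Sym2.eq_iff] at heq
    rcases heq with ⟨h1, h2⟩ | ⟨h1, h2⟩
    · apply hTne
      ext v
      have c1 := congrFun h2 v
      rw [h1] at c1
      simp only [shift] at c1
      constructor
      · intro hv
        by_contra hw
        rw [if_pos hv, if_neg hw] at c1
        omega
      · intro hv
        by_contra hw
        rw [if_neg hw, if_pos hv] at c1
        omega
    · have hvT := hmemT p.1 p.2 hp.2.2
      have c1 := congrFun h2 (π p.1)
      rw [h1] at c1
      simp only [shift] at c1
      rw [if_pos hvT] at c1
      omega
  have hcount : ∀ p ∈ F, ((hEpfin p).toFinset).card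
      = (q + k - 2 - (adjInvF k π).card -
          numBlocks ((Finset.Icc p.1 (p.2 - 1)).image π)).choose (k - 1) := by
    intro p hp
    rw [hFmem] at hp
    rw [← Set.ncard_eq_toFinset_card _ (hEpfin p)]
    have hinj : Set.InjOn (fun x => s(x, shift π p.1 p.2 x))
        {x | x ∈ W k q π ∧ shift π p.1 p.2 x ∈ W k q π} := by
      intro x hx y hy hxy
      simp only [Sym2.eq_iff] at hxy
      rcases hxy with ⟨h1, _⟩ | ⟨h1, h2⟩
      · exact h1
      · exfalso
        have hvT := hmemT p.1 p.2 hp.2.2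
        have c1 := congrFun h1 (π p.1)
        have c2 := congrFun h2 (π p.1)
        simp only [shift] at c1 c2
        rw [if_pos hvT] at c1 c2
        omega
    rw [Set.ncard_image_of_injOn hinj]
    have hTsub := Stmt3Aux.Tab_subset hbijπ hp.1 hp.2.1 hp.2.2
    have hbase_eq : {x | x ∈ W k q π ∧ shift π p.1 p.2 x ∈ W k q π}
        = Stmt3Aux.chainSet k q
            (Stmt3Aux.gT k π ((Finset.Icc p.1 (p.2 - 1)).image π)) := by
      ext x
      exact Stmt3Aux.mem_W_shift_iff hk hq π _ hTsub x
    rw [hbase_eq, Stmt3Aux.chainSet_ncard hk hq, Stmt3Aux.Hp_gT hk π _ hTsub]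
    congr 1
    omega
  have hmaps : ∀ p ∈ F,
      numBlocks ((Finset.Icc p.1 (p.2 - 1)).image π) ∈ Finset.Icc 1 (k / 2) := by
    intro p hp
    rw [hFmem] at hp
    have hTsub := Stmt3Aux.Tab_subset hbijπ hp.1 hp.2.1 hp.2.2
    have hTne := Stmt3Aux.Tab_nonempty (π := π) (a := p.1) (b := p.2) hp.2.2
    exact Finset.mem_Icc.mpr
      ⟨Stmt3Aux.numBlocks_pos hTne, Stmt3Aux.numBlocks_le hTne hTsub⟩
  have hunion : (⋃ p ∈ F, ((fun x => s(x, shift π p.1 p.2 x)) ''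
          {x | x ∈ W k q π ∧ shift π p.1 p.2 x ∈ W k q π}))
      = ↑(F.biUnion (fun p => (hEpfin p).toFinset)) := by
    ext e
    simp only [Set.mem_iUnion, Finset.coe_biUnion, Finset.mem_coe,
      Finset.mem_biUnion, Set.Finite.mem_toFinset, Set.mem_image, exists_prop]
  rw [hE, hunion, Set.ncard_coe_finset, Finset.card_biUnion hdisj,
    Finset.sum_congr rfl hcount,
    ← Finset.sum_fiberwise_of_maps_to hmaps
      (fun p => (q + k - 2 - (adjInvF k π).card -
        numBlocks ((Finset.Icc p.1 (p.2 - 1)).image π)).choose (k - 1))]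
  apply Finset.sum_congr rfl
  intro i hi
  have hsum : ∀ p ∈ F.filter
      (fun p : ℕ × ℕ => numBlocks ((Finset.Icc p.1 (p.2 - 1)).image π) = i),
      (q + k - 2 - (adjInvF k π).card -
        numBlocks ((Finset.Icc p.1 (p.2 - 1)).image π)).choose (k - 1)
      = (q + k - 2 - (adjInvF k π).card - i).choose (k - 1) := by
    intro p hp
    rw [(Finset.mem_filter.mp hp).2]
  rw [Finset.sum_congr rfl hsum, Finset.sum_const, smul_eq_mul]
  congr 1
  unfold cs
  congr 1
  ext p
  simp only [Finset.mem_filter, Finset.mem_product, Finset.mem_Icc, hFdef]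
  tauto

end
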